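/- arXiv:2002.00587 — 2 statements merged into one kernel-verified Lean document; each statement's English description precedes it below -/
import Mathlib

section
/- Let m ≥ 0 and p ≥ 1, and let g : ℝ → ℝ be a polynomial function of order m. Then the function G_p(x) = x^p g(x) is a polynomial function of order m + p; in particular, x ↦ x g(x) is a polynomial function of order m + 1. -/
/-- The simple difference operator `Δ_h f (x) = f (x + h) - f x`. -/
def simpleDiff (h : ℝ) (f : ℝ → ℝ) : ℝ → ℝ := fun x => f (x + h) - f x

/-- `f` is a polynomial function of order `m` if `Δ_h^{m+1} f = 0` for every `h`. -/
def IsPolynomialFunction (m : ℕ) (f : ℝ → ℝ) : Prop :=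
  ∀ x h : ℝ, (simpleDiff h)^[m + 1] f x = 0

lemma simpleDiff_iterate_mul (g : ℝ → ℝ) (h : ℝ) :
    ∀ n x, (simpleDiff h)^[n + 1] (fun y => y * g y) x
      = x * (simpleDiff h)^[n + 1] g x + (n + 1 : ℝ) * h * ((simpleDiff h)^[n] g (x + h)) := by
  intro n
  induction n with
  | zero =>
    intro x
    simp [simpleDiff]
    ring
  | succ n ih =>
    intro x
    have e1 : (simpleDiff h)^[n + 2] (fun y => y * g y) x
        = (simpleDiff h)^[n + 1] (fun y => y * g y) (x + h)
          - (simpleDiff h)^[n + 1] (fun y => y * g y) x := by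
      rw [Function.iterate_succ_apply']; rfl
    have e2 : (simpleDiff h)^[n + 2] g x
        = (simpleDiff h)^[n + 1] g (x + h) - (simpleDiff h)^[n + 1] g x := by
      rw [Function.iterate_succ_apply']; rfl
    have e3 : (simpleDiff h)^[n + 1] g (x + h)
        = (simpleDiff h)^[n] g (x + h + h) - (simpleDiff h)^[n] g (x + h) := by
      rw [Function.iterate_succ_apply']; rfl
    rw [e1, ih (x + h), ih x, e2, e3]
    push_cast
    ring

lemma isPolynomialFunction_mul (m : ℕ) (g : ℝ → ℝ) (hg : IsPolynomialFunction m g) :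
    IsPolynomialFunction (m + 1) (fun x => x * g x) := by
  intro x h
  have e2 : (simpleDiff h)^[m + 2] g x
      = (simpleDiff h)^[m + 1] g (x + h) - (simpleDiff h)^[m + 1] g x := by
    rw [Function.iterate_succ_apply']; rfl
  have := simpleDiff_iterate_mul g h (m + 1) x
  rw [show m + 1 + 1 = m + 2 from rfl] at *
  rw [this, e2, hg (x + h) h, hg x h]
  ring

lemma isPolynomialFunction_pow_mul (m : ℕ) (g : ℝ → ℝ) (hg : IsPolynomialFunction m g) :
    ∀ p, IsPolynomialFunction (m + (p + 1)) (fun x => x ^ (p + 1) * g x) := by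
  intro p
  induction p with
  | zero =>
    have : (fun x : ℝ => x ^ 1 * g x) = fun x => x * g x := by funext x; ring
    rw [this]
    exact isPolynomialFunction_mul m g hg
  | succ p ih =>
    have : (fun x : ℝ => x ^ (p + 2) * g x) = fun x => x * (x ^ (p + 1) * g x) := by
      funext x; ring
    rw [this]
    have := isPolynomialFunction_mul (m + (p + 1)) _ ih
    rwa [show m + (p + 1) + 1 = m + (p + 2) from by ring] at this

/-- From the proof of Lemma 3.2: if `g` is a polynomial function of order `m`, then
`x ↦ x^p * g x` is a polynomial function of order `m + p`; in particular `x ↦ x * g x`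
is a polynomial function of order `m + 1`. -/
theorem polynomialFunction_mul_pow (m p : ℕ) (hp : 1 ≤ p)
    (g : ℝ → ℝ) (hg : IsPolynomialFunction m g) :
    IsPolynomialFunction (m + p) (fun x => x ^ p * g x) ∧
    IsPolynomialFunction (m + 1) (fun x => x * g x) := by
  constructor
  · obtain ⟨q, rfl⟩ := Nat.exists_eq_add_of_le hp
    have := isPolynomialFunction_pow_mul m g hg q
    rwa [show q + 1 = 1 + q from by ring] at this
  · exact isPolynomialFunction_mul m g hg
end

section
/- Let n ≥ 1 and k ≥ 1, let a¹, …, aᵏ be vectors in ℝⁿ, and let H₁, …, H_k : ℝ → ℝ be polynomial functions of order k−1. If the function F(x) = Σ_{i=1}^{k} H_i(aⁱ·x) is continuous on ℝⁿ, then F coincides on all of ℝⁿ with a polynomial of degree at most k−1. -/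
open Polynomial

/-- Iterated differences are additive over subtraction. -/
lemma iter_simpleDiff_sub (s : ℝ) : ∀ (m : ℕ) (f g : ℝ → ℝ) (x : ℝ),
    (simpleDiff s)^[m] (fun t => f t - g t) x
      = (simpleDiff s)^[m] f x - (simpleDiff s)^[m] g x := by
  intro m
  induction m with
  | zero => intro f g x; simp
  | succ m ih =>
    intro f g x
    rw [Function.iterate_succ_apply, Function.iterate_succ_apply,
      Function.iterate_succ_apply]
    have : simpleDiff s (fun t => f t - g t)
        = fun t => simpleDiff s f t - simpleDiff s g t := by
      funext t; simp [simpleDiff]; ring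
    rw [this, ih]

/-- Iterated differences over finite sums. -/
lemma iter_simpleDiff_sum {ι : Type*} [Fintype ι] (s : ℝ) :
    ∀ (m : ℕ) (f : ι → ℝ → ℝ) (x : ℝ),
    (simpleDiff s)^[m] (fun t => ∑ i, f i t) x = ∑ i, (simpleDiff s)^[m] (f i) x := by
  intro m
  induction m with
  | zero => intro f x; simp
  | succ m ih =>
    intro f x
    rw [Function.iterate_succ_apply]
    have : simpleDiff s (fun t => ∑ i, f i t)
        = fun t => ∑ i, simpleDiff s (f i) t := by
      funext t; simp [simpleDiff, Finset.sum_sub_distrib]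
    rw [this, ih]
    exact Finset.sum_congr rfl fun i _ => by rw [Function.iterate_succ_apply]

/-- Iterated differences of an affine precomposition. -/
lemma iter_simpleDiff_affine (s c d : ℝ) : ∀ (m : ℕ) (u : ℝ → ℝ) (x : ℝ),
    (simpleDiff s)^[m] (fun t => u (c + t * d)) x
      = (simpleDiff (s * d))^[m] u (c + x * d) := by
  intro m
  induction m with
  | zero => intro u x; simp
  | succ m ih =>
    intro u x
    rw [Function.iterate_succ_apply, Function.iterate_succ_apply]
    have : simpleDiff s (fun t => u (c + t * d))
        = fun t => (simpleDiff (s * d) u) (c + t * d) := by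
      funext t
      simp only [simpleDiff]
      ring_nf
    rw [this, ih]

/-- Grid extension: if the `k`-th differences of `φ` vanish and `φ` vanishes on the
first `k` nodes of an arithmetic grid, then `φ` vanishes on the whole forward grid. -/
lemma grid_zero (s x₀ : ℝ) : ∀ (k : ℕ) (φ : ℝ → ℝ),
    (∀ x, (simpleDiff s)^[k] φ x = 0) → (∀ j : ℕ, j < k → φ (x₀ + j * s) = 0) →
    ∀ j : ℕ, φ (x₀ + j * s) = 0 := by
  intro k
  induction k with
  | zero =>
    intro φ h0 _ j
    simpa using h0 (x₀ + j * s)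
  | succ k ih =>
    intro φ hd hz
    have hψd : ∀ x, (simpleDiff s)^[k] (simpleDiff s φ) x = 0 := by
      intro x
      have := hd x
      rwa [Function.iterate_succ_apply] at this
    have hψz : ∀ j : ℕ, j < k → (simpleDiff s φ) (x₀ + j * s) = 0 := by
      intro j hj
      have h1 := hz j (by omega)
      have h2 := hz (j + 1) (by omega)
      simp only [simpleDiff]
      have : x₀ + j * s + s = x₀ + (j + 1 : ℕ) * s := by push_cast; ring
      rw [this, h2, h1, sub_zero]
    have key := ih _ hψd hψz
    intro j
    induction j with
    | zero => simpa using hz 0 (by omega)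
    | succ j ihj =>
      have hk := key j
      simp only [simpleDiff] at hk
      have he : x₀ + j * s + s = x₀ + (j + 1 : ℕ) * s := by push_cast; ring
      rw [he] at hk
      have := sub_eq_zero.mp hk
      rw [this, ihj]


lemma natDegree_taylor_sub_le (p : ℝ[X]) (s : ℝ) (k : ℕ) (hp : p.natDegree ≤ k + 1) :
    (Polynomial.taylor s p - p).natDegree ≤ k := by
  rw [Polynomial.natDegree_le_iff_coeff_eq_zero]
  intro N hN
  rw [Polynomial.coeff_sub]
  rcases eq_or_lt_of_le (Nat.succ_le_of_lt hN) with h | h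
  · -- N = k+1
    have hC : (Polynomial.taylor s p).coeff N = p.coeff N := by
      rw [Polynomial.taylor_coeff]
      have : Polynomial.hasseDeriv N p = Polynomial.C (p.coeff N) := by
        ext m
        rw [Polynomial.hasseDeriv_coeff, Polynomial.coeff_C]
        rcases Nat.eq_zero_or_pos m with rfl | hm
        · simp
        · have : p.coeff (m + N) = 0 := by
            apply Polynomial.coeff_eq_zero_of_natDegree_lt
            omega
          simp [this, hm.ne']
      rw [this, Polynomial.eval_C]
    rw [hC, sub_self]
  · have h1 : (Polynomial.taylor s p).coeff N = 0 := by
      apply Polynomial.coeff_eq_zero_of_natDegree_lt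
      rw [Polynomial.natDegree_taylor]; omega
    have h2 : p.coeff N = 0 := Polynomial.coeff_eq_zero_of_natDegree_lt (by omega)
    rw [h1, h2, sub_self]

lemma simpleDiff_polyEval (s : ℝ) (p : ℝ[X]) :
    simpleDiff s (fun t => p.eval t) = fun t => (Polynomial.taylor s p - p).eval t := by
  funext t
  simp [simpleDiff, Polynomial.eval_sub, Polynomial.taylor_eval]

lemma iter_simpleDiff_poly (s : ℝ) : ∀ (k : ℕ) (p : ℝ[X]), p.natDegree ≤ k →
    ∀ x, (simpleDiff s)^[k + 1] (fun t => p.eval t) x = 0 := by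
  intro k
  induction k with
  | zero =>
    intro p hp x
    have : p = Polynomial.C (p.coeff 0) := Polynomial.eq_C_of_natDegree_le_zero hp
    rw [this]
    simp [simpleDiff]
  | succ k ih =>
    intro p hp x
    rw [Function.iterate_succ_apply, simpleDiff_polyEval]
    exact ih _ (natDegree_taylor_sub_le p s k hp) x

/-- 1-D Fréchet: a continuous function with vanishing `k`-th differences is a
polynomial function of degree at most `k - 1`. -/
lemma oneDim_frechet (k : ℕ) (hk : 1 ≤ k) (g : ℝ → ℝ) (hg : Continuous g)
    (hd : ∀ s x, (simpleDiff s)^[k] g x = 0) :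
    ∃ p : ℝ[X], p.natDegree ≤ k - 1 ∧ ∀ t, g t = p.eval t := by
  have hinjN : Set.InjOn (fun i : ℕ => (i : ℝ)) (Finset.range k) :=
    fun i _ j _ h => Nat.cast_injective h
  set P : ℝ[X] := Lagrange.interpolate (Finset.range k) (fun i : ℕ => (i : ℝ))
    (fun i => g i) with hP
  have hPdeg : P.degree < k := by
    rw [hP]; simpa using Lagrange.degree_interpolate_lt _ hinjN
  have hPnat : P.natDegree ≤ k - 1 := by
    rcases eq_or_ne P 0 with h0 | h0
    · simp [h0]
    · have := (Polynomial.natDegree_lt_iff_degree_lt h0).mpr (by exact_mod_cast hPdeg)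
      omega
  refine ⟨P, hPnat, ?_⟩
  -- Step 1: g agrees with P at every rational point a / b.
  have key : ∀ (b : ℕ), 0 < b → ∀ a : ℤ, g ((a : ℝ) / b) = P.eval ((a : ℝ) / b) := by
    intro b hb a
    have hbR : (0:ℝ) < b := by exact_mod_cast hb
    set s : ℝ := 1 / b with hs
    have hs0 : s ≠ 0 := by positivity
    set c : ℤ := min a 0 with hc
    have hc0 : c ≤ 0 := min_le_right _ _
    have hca : c ≤ a := min_le_left _ _
    set x₀ : ℝ := (c : ℝ) / b with hx0
    -- the node map
    set v : ℕ → ℝ := fun i => x₀ + i * s with hv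
    have hinjv : Set.InjOn v (Finset.range k) := by
      intro i _ j _ h
      simp only [hv] at h
      have : (i : ℝ) * s = (j : ℝ) * s := by linarith
      have := mul_right_cancel₀ hs0 this
      exact_mod_cast this
    set q : ℝ[X] := Lagrange.interpolate (Finset.range k) v (fun i => g (v i)) with hq
    have hqdeg : q.degree < k := by rw [hq]; simpa using Lagrange.degree_interpolate_lt _ hinjv
    have hqnat : q.natDegree ≤ k - 1 := by
      rcases eq_or_ne q 0 with h0 | h0
      · simp [h0]
      · have := (Polynomial.natDegree_lt_iff_degree_lt h0).mpr (by exact_mod_cast hqdeg)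
        omega
    -- φ := g - eval q vanishes on the whole grid x₀ + ℕ s
    have hgrid : ∀ j : ℕ, g (x₀ + j * s) - q.eval (x₀ + j * s) = 0 := by
      apply grid_zero s x₀ k (fun t => g t - q.eval t)
      · intro x
        rw [iter_simpleDiff_sub, hd]
        have hk' : k - 1 + 1 = k := by omega
        have := iter_simpleDiff_poly s (k - 1) q hqnat x
        rw [hk'] at this
        rw [this, sub_zero]
      · intro j hj
        have := Lagrange.eval_interpolate_at_node (fun i => g (v i)) hinjv
          (Finset.mem_range.mpr hj)
        simp only [← hq] at this
        simp only [hv] at this ⊢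
        rw [this, sub_self]
    -- grid points: x₀ + j * s = (c + j) / b
    have hgp : ∀ j : ℕ, x₀ + (j : ℝ) * s = ((c : ℝ) + j) / b := by
      intro j; rw [hx0, hs]; field_simp
    -- q and P agree at the integer nodes 0, 1, ..., k-1, hence q = P
    have hqP : q = P := by
      apply Polynomial.eq_of_degrees_lt_of_eval_index_eq (Finset.range k) hinjN
        (by simpa using hqdeg) (by simpa using hPdeg)
      intro i hi
      have hiK := Finset.mem_range.mp hi
      -- the integer i is the grid point with index j = i*b - c
      set j : ℕ := (i * b - c).toNat with hj
      have hjval : (j : ℤ) = i * b - c := by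
        rw [hj, Int.toNat_of_nonneg]
        have : (0:ℤ) ≤ i * b := by positivity
        omega
      have hnode : x₀ + (j : ℝ) * s = (i : ℝ) := by
        rw [hgp j]
        have : ((c : ℝ) + j) = i * b := by
          have : ((j : ℤ) : ℝ) = ((i : ℤ) : ℝ) * ((b : ℤ) : ℝ) - (c : ℝ) := by
            rw [hjval]; push_cast; ring
          push_cast at this ⊢
          linarith
        rw [this]
        field_simp
      have h1 := hgrid j
      rw [hnode] at h1
      have h2 : P.eval (i : ℝ) = g i :=
        Lagrange.eval_interpolate_at_node (fun i : ℕ => g i) hinjN hi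
      have : q.eval (i : ℝ) = g i := by linarith [h1]
      rw [this, h2]
    -- a/b is the grid point with index a - c
    set j : ℕ := (a - c).toNat with hj
    have hjval : (j : ℤ) = a - c := by rw [hj, Int.toNat_of_nonneg]; omega
    have hnode : x₀ + (j : ℝ) * s = (a : ℝ) / b := by
      rw [hgp j]
      have : ((c : ℝ) + j) = (a : ℝ) := by
        have : ((j : ℤ) : ℝ) = (a : ℝ) - (c : ℝ) := by rw [hjval]; push_cast; ring
        push_cast at this ⊢; linarith
      rw [this]
    have := hgrid j
    rw [hnode, hqP] at this
    linarith
  -- Step 2: density of ℚ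
  have hrat : ∀ r : ℚ, g (r : ℝ) = P.eval (r : ℝ) := by
    intro r
    have := key r.den r.den_pos r.num
    rwa [← Rat.cast_def] at this
  have : g = fun t => P.eval t := by
    apply Continuous.ext_on Rat.denseRange_cast hg (Polynomial.continuous_aeval P)
    rintro x ⟨r, rfl⟩
    exact hrat r
  exact fun t => by rw [this]

/-- A continuous 1-parameter family `t ↦ ∑ H i (c i + t * d i)` with profiles that are
polynomial functions of order `k-1` is a polynomial of degree at most `k-1`. -/
lemma line_case (k : ℕ) (hk : 1 ≤ k) (H : Fin k → ℝ → ℝ)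
    (hH : ∀ i, IsPolynomialFunction (k - 1) (H i)) (c d : Fin k → ℝ)
    (hcont : Continuous fun t : ℝ => ∑ i, H i (c i + t * d i)) :
    ∃ p : ℝ[X], p.natDegree ≤ k - 1 ∧ ∀ t, (∑ i, H i (c i + t * d i)) = p.eval t := by
  apply oneDim_frechet k hk _ hcont
  intro s x
  rw [iter_simpleDiff_sum]
  apply Finset.sum_eq_zero
  intro i _
  rw [iter_simpleDiff_affine]
  have := hH i (c i + x * d i) (s * d i)
  rwa [Nat.sub_add_cancel hk] at this

/-- Lagrange reproduction: a polynomial function of degree `< k` equals the Lagrange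
combination of its values at `0, 1, ..., k-1`. -/
lemma lagrange_reproduce (k : ℕ) (hk : 1 ≤ k) (p : ℝ[X]) (hp : p.natDegree ≤ k - 1) (t : ℝ) :
    p.eval t = ∑ i ∈ Finset.range k,
      p.eval (i : ℝ) * (Lagrange.basis (Finset.range k) (fun m : ℕ => (m : ℝ)) i).eval t := by
  have hinj : Set.InjOn (fun i : ℕ => (i : ℝ)) (Finset.range k) :=
    fun i _ j _ h => Nat.cast_injective h
  have hdeg : p.degree < (Finset.range k).card := by
    rcases eq_or_ne p 0 with rfl | h0
    · rw [Polynomial.degree_zero]; exact_mod_cast WithBot.bot_lt_coe ((Finset.range k).card)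
    · rw [Finset.card_range]
      have h1 : p.degree = (p.natDegree : WithBot ℕ) := Polynomial.degree_eq_natDegree h0
      rw [h1]
      exact_mod_cast Nat.lt_of_le_of_lt hp (by omega)
  have := Lagrange.eq_interpolate hinj hdeg
  conv_lhs => rw [this]
  rw [Lagrange.interpolate_apply, Polynomial.eval_finset_sum]
  exact Finset.sum_congr rfl fun i _ => by rw [Polynomial.eval_mul, Polynomial.eval_C]

/-- update at 0 in terms of cons/tail -/
lemma update_zero_eq_cons {n : ℕ} (x : Fin (n + 1) → ℝ) (t : ℝ) :
    Function.update x 0 t = Fin.cons t (Fin.tail x) := by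
  funext j
  cases j using Fin.cases with
  | zero => simp
  | succ j => simp [Fin.tail, Function.update_of_ne (Fin.succ_ne_zero j)]

/-- Multivariate assembly: a function all of whose coordinate sections are polynomial
functions of degree `≤ k - 1` is given by a multivariate polynomial. -/
lemma assemble : ∀ (n : ℕ) (k : ℕ), 1 ≤ k → ∀ (f : (Fin n → ℝ) → ℝ),
    (∀ (x : Fin n → ℝ) (j : Fin n), ∃ p : ℝ[X], p.natDegree ≤ k - 1 ∧
      ∀ t, f (Function.update x j t) = p.eval t) →
    ∃ Q : MvPolynomial (Fin n) ℝ, ∀ x, f x = MvPolynomial.eval x Q := by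
  intro n
  induction n with
  | zero =>
    intro k hk f _
    refine ⟨MvPolynomial.C (f default), fun x => ?_⟩
    have : x = default := by funext j; exact j.elim0
    rw [this]
    simp
  | succ n ih =>
    intro k hk f hf
    -- sections at x 0 = i
    have hsec : ∀ i : ℕ, ∃ Q : MvPolynomial (Fin n) ℝ,
        ∀ y : Fin n → ℝ, f (Fin.cons (i : ℝ) y) = MvPolynomial.eval y Q := by
      intro i
      apply ih k hk
      intro y j
      obtain ⟨p, hp1, hp2⟩ := hf (Fin.cons (i : ℝ) y) j.succ
      refine ⟨p, hp1, fun t => ?_⟩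
      rw [← hp2 t, Fin.cons_update]
    choose Q hQ using hsec
    refine ⟨∑ i ∈ Finset.range k,
      Polynomial.aeval (MvPolynomial.X (0 : Fin (n + 1)))
        (Lagrange.basis (Finset.range k) (fun m : ℕ => (m : ℝ)) i) *
      MvPolynomial.rename Fin.succ (Q i), fun x => ?_⟩
    rw [map_sum]
    have heval : ∀ i ∈ Finset.range k,
        MvPolynomial.eval x (Polynomial.aeval (MvPolynomial.X (0 : Fin (n + 1)))
            (Lagrange.basis (Finset.range k) (fun m : ℕ => (m : ℝ)) i) *
          MvPolynomial.rename Fin.succ (Q i))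
        = (Lagrange.basis (Finset.range k) (fun m : ℕ => (m : ℝ)) i).eval (x 0) *
          f (Fin.cons (i : ℝ) (Fin.tail x)) := by
      intro i _
      rw [map_mul]
      congr 1
      · -- eval x (aeval (X 0) b) = b.eval (x 0)
        generalize Lagrange.basis (Finset.range k) (fun m : ℕ => (m : ℝ)) i = b
        induction b using Polynomial.induction_on' with
        | add u v hu hv => simp only [map_add, Polynomial.eval_add, hu, hv]
        | monomial m a => simp [Polynomial.aeval_monomial, Polynomial.eval_monomial]
      · rw [MvPolynomial.eval_rename]
        exact (hQ i (Fin.tail x)).symm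
    rw [Finset.sum_congr rfl heval]
    -- use the section along coordinate 0
    obtain ⟨p, hp1, hp2⟩ := hf x 0
    have hcons : ∀ i : ℕ, f (Fin.cons (i : ℝ) (Fin.tail x)) = p.eval (i : ℝ) := by
      intro i
      rw [← update_zero_eq_cons x (i : ℝ)]
      exact hp2 (i : ℝ)
    have hfx : f x = p.eval (x 0) := by
      have := hp2 (x 0)
      rwa [Function.update_eq_self] at this
    rw [hfx, lagrange_reproduce k hk p hp1 (x 0)]
    exact Finset.sum_congr rfl fun i _ => by rw [hcons i, mul_comm]

noncomputable def linePoly {n : ℕ} (y : Fin n → ℝ) (P : MvPolynomial (Fin n) ℝ) : ℝ[X] :=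
  MvPolynomial.aeval (fun j => Polynomial.C (y j) * Polynomial.X) P

lemma linePoly_eval {n : ℕ} (y : Fin n → ℝ) (P : MvPolynomial (Fin n) ℝ) (t : ℝ) :
    (linePoly y P).eval t = MvPolynomial.eval (fun j => t * y j) P := by
  induction P using MvPolynomial.induction_on with
  | C a => simp [linePoly]
  | add p q hp hq => simp only [linePoly, map_add, Polynomial.eval_add] at *; rw [hp, hq]
  | mul_X p j hp =>
    simp only [linePoly, map_mul, Polynomial.eval_mul] at *
    rw [hp]
    simp only [MvPolynomial.aeval_X, Polynomial.eval_mul, Polynomial.eval_C,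
      Polynomial.eval_X, MvPolynomial.eval_X]
    ring

lemma linePoly_monomial {n : ℕ} (y : Fin n → ℝ) (m : Fin n →₀ ℕ) (c : ℝ) :
    linePoly y (MvPolynomial.monomial m c)
      = Polynomial.C (c * m.prod fun j e => y j ^ e)
          * Polynomial.X ^ (m.sum fun _ e => e) := by
  rw [linePoly, MvPolynomial.aeval_monomial]
  have hfac : ∀ j ∈ m.support, (Polynomial.C (y j) * Polynomial.X) ^ m j
      = Polynomial.C (y j ^ m j) * Polynomial.X ^ m j := by
    intro j _; rw [mul_pow, ← Polynomial.C_pow]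
  rw [Finsupp.prod, Finset.prod_congr rfl hfac, Finset.prod_mul_distrib,
    ← map_prod, Finset.prod_pow_eq_pow_sum]
  rw [Polynomial.algebraMap_eq, ← mul_assoc, ← Polynomial.C_mul]
  rfl

lemma homogeneousComponent_monomial' {n : ℕ} (d : ℕ) (m : Fin n →₀ ℕ) (c : ℝ) :
    MvPolynomial.homogeneousComponent d (MvPolynomial.monomial m c)
      = if (m.sum fun _ e => e) = d then MvPolynomial.monomial m c else 0 := by
  ext m'
  rw [MvPolynomial.coeff_homogeneousComponent]
  have hdeg : m'.degree = m'.sum fun _ e => e := rfl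
  by_cases hmm : m = m'
  · subst hmm
    rw [hdeg]
    split_ifs <;> simp_all [MvPolynomial.coeff_monomial, Finsupp.sum]
  · split_ifs <;> simp [MvPolynomial.coeff_monomial, hmm]

lemma linePoly_coeff {n : ℕ} (y : Fin n → ℝ) (P : MvPolynomial (Fin n) ℝ) (d : ℕ) :
    (linePoly y P).coeff d = MvPolynomial.eval y (MvPolynomial.homogeneousComponent d P) := by
  have hdecomp : linePoly y P = ∑ m ∈ P.support,
      linePoly y (MvPolynomial.monomial m (MvPolynomial.coeff m P)) := by
    unfold linePoly
    rw [← map_sum, MvPolynomial.support_sum_monomial_coeff]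
  rw [hdecomp, Polynomial.finset_sum_coeff]
  conv_rhs => rw [← MvPolynomial.support_sum_monomial_coeff P]
  rw [map_sum, map_sum]
  apply Finset.sum_congr rfl
  intro m _
  show (linePoly y (MvPolynomial.monomial m (MvPolynomial.coeff m P))).coeff d = _
  rw [linePoly_monomial, homogeneousComponent_monomial']
  rw [Polynomial.coeff_C_mul, Polynomial.coeff_X_pow]
  by_cases h : (m.sum fun _ e => e) = d
  · rw [if_pos h, if_pos h.symm, mul_one, MvPolynomial.eval_monomial]
  · rw [if_neg h, if_neg (fun hh => h hh.symm), mul_zero, map_zero]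

lemma totalDegree_le_of_lines {n k : ℕ} (hk : 1 ≤ k) (P : MvPolynomial (Fin n) ℝ)
    (h : ∀ y : Fin n → ℝ, ∃ q : ℝ[X], q.natDegree ≤ k - 1 ∧
      ∀ t, MvPolynomial.eval (fun j => t * y j) P = q.eval t) :
    P.totalDegree ≤ k - 1 := by
  have hzero : ∀ d, k - 1 < d → MvPolynomial.homogeneousComponent d P = 0 := by
    intro d hd
    apply MvPolynomial.funext
    intro y
    obtain ⟨q, hq1, hq2⟩ := h y
    have hq : linePoly y P = q :=
      Polynomial.funext fun t => by rw [linePoly_eval, hq2]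
    rw [← linePoly_coeff, hq, Polynomial.coeff_eq_zero_of_natDegree_lt
      (lt_of_le_of_lt hq1 hd)]
    simp
  rw [MvPolynomial.totalDegree]
  apply Finset.sup_le
  intro m hm
  by_contra hgt
  push_neg at hgt
  have h0 := hzero _ hgt
  have hc : MvPolynomial.coeff m P = 0 := by
    have := MvPolynomial.coeff_homogeneousComponent
      (n := m.sum fun _ e => e) m (φ := P)
    rw [h0] at this
    have hdeg : m.degree = m.sum fun _ e => e := rfl
    rw [hdeg, if_pos rfl] at this
    simpa using this.symm
  exact (MvPolynomial.mem_support_iff.mp hm) hc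

/-- From the proof of Theorem 4.1: a continuous sum of ridge functions whose profiles
are polynomial functions of order `k - 1` coincides with a polynomial of degree at most
`k - 1`. -/
theorem continuous_sum_ridge_polynomialFunctions_is_polynomial (n k : ℕ)
    (hn : 1 ≤ n) (hk : 1 ≤ k)
    (a : Fin k → (Fin n → ℝ))
    (H : Fin k → (ℝ → ℝ)) (hH : ∀ i : Fin k, IsPolynomialFunction (k - 1) (H i))
    (hcont : Continuous (fun x : Fin n → ℝ => ∑ i : Fin k, H i (∑ j : Fin n, a i j * x j))) :
    ∃ P : MvPolynomial (Fin n) ℝ, P.totalDegree ≤ k - 1 ∧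
      ∀ x : Fin n → ℝ,
        ∑ i : Fin k, H i (∑ j : Fin n, a i j * x j) = MvPolynomial.eval x P := by
  set F : (Fin n → ℝ) → ℝ := fun x => ∑ i : Fin k, H i (∑ j : Fin n, a i j * x j) with hF
  -- every line restriction of F is a polynomial of degree ≤ k - 1
  have hline : ∀ (x y : Fin n → ℝ), ∃ p : ℝ[X], p.natDegree ≤ k - 1 ∧
      ∀ t : ℝ, F (x + t • y) = p.eval t := by
    intro x y
    set c : Fin k → ℝ := fun i => ∑ j, a i j * x j with hc
    set d : Fin k → ℝ := fun i => ∑ j, a i j * y j with hd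
    have hpt : ∀ t : ℝ, F (x + t • y) = ∑ i, H i (c i + t * d i) := by
      intro t
      apply Finset.sum_congr rfl
      intro i _
      congr 1
      simp only [hc, hd, Pi.add_apply, Pi.smul_apply, smul_eq_mul, mul_add,
        Finset.sum_add_distrib, Finset.mul_sum]
      congr 1
      exact Finset.sum_congr rfl fun j _ => by ring
    have hcont' : Continuous fun t : ℝ => ∑ i, H i (c i + t * d i) := by
      have heq : (fun t : ℝ => ∑ i, H i (c i + t * d i))
          = F ∘ (fun t : ℝ => x + t • y) := funext fun t => (hpt t).symm
      rw [heq]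
      exact hcont.comp (by continuity)
    obtain ⟨p, h1, h2⟩ := line_case k hk H hH c d hcont'
    exact ⟨p, h1, fun t => by rw [hpt t, h2 t]⟩
  -- coordinate sections are polynomial
  have hsec : ∀ (x : Fin n → ℝ) (j : Fin n), ∃ p : ℝ[X], p.natDegree ≤ k - 1 ∧
      ∀ t : ℝ, F (Function.update x j t) = p.eval t := by
    intro x j
    obtain ⟨p, h1, h2⟩ := hline (Function.update x j 0) (Pi.single j 1)
    refine ⟨p, h1, fun t => ?_⟩
    rw [← h2 t]
    congr 1
    funext j'
    by_cases hj : j' = j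
    · subst hj; simp
    · simp [Function.update_of_ne hj, Pi.single_eq_of_ne hj]
  obtain ⟨Q, hQ⟩ := assemble n k hk F hsec
  refine ⟨Q, ?_, fun x => hQ x⟩
  apply totalDegree_le_of_lines hk
  intro y
  obtain ⟨p, h1, h2⟩ := hline 0 y
  refine ⟨p, h1, fun t => ?_⟩
  rw [← hQ, ← h2 t]
  congr 1
  funext j
  simp
end
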